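/- For every integer r ≥ 6 one has the identity of formal power series in ℤ[[u]]: (1-u)(1-u²)·P_r(1,u) = u³·P_{r-6}(1,u), where P_m(1,u) is obtained from P_m(q,u) by evaluating each coefficient at q = 1. -/

import Mathlib

open scoped PowerSeries

/-- The polynomials `p_{s,r}(q) ∈ ℤ[q]` (the graded multiplicities
`[D(2,sω) : D(3,rω)]_q`): `p_{0,0} = p_{1,1} = p_{2,2} = 1`; `p_{s,r} = 0` whenever
`r > s`, or `s - r` is odd, or `s ≤ 2` and `(s,r) ∉ {(0,0),(1,1),(2,2)}`; and for
`s ≥ 3` with `r ≤ s` and `s - r` even, writing `s = 2s₁ + s₀` with `s₀ ∈ {0,1}`,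
`p_{s,r} = q^{(s-r)/2} p_{s-3,r-3} + q^{(s₁+s₀-1)(2-s₀)} p_{s-4+2s₀,r}` if `r ≥ 3`, and
`p_{s,r} = q^{(s₁+s₀-1)(2-s₀)} p_{s-4+2s₀,r}` if `0 ≤ r ≤ 2`. -/
noncomputable def pp : ℕ → ℕ → Polynomial ℤ
  | 0, r => if r = 0 then 1 else 0
  | 1, r => if r = 1 then 1 else 0
  | 2, r => if r = 2 then 1 else 0
  | (s + 3), r =>
    if (s + 3) < r ∨ (s + 3) % 2 ≠ r % 2 then 0
    else
      (if 3 ≤ r then Polynomial.X ^ (((s + 3) - r) / 2) * pp s (r - 3) else 0)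
        + Polynomial.X ^ (((s + 3) / 2 + (s + 3) % 2 - 1) * (2 - (s + 3) % 2))
            * pp ((s + 3) + 2 * ((s + 3) % 2) - 4) r
  termination_by s _ => s
  decreasing_by
  · omega
  · omega

noncomputable def aa (s r : ℕ) : ℤ := (pp s r).eval 1

lemma pp_zero (s r : ℕ) (h : s < r ∨ s % 2 ≠ r % 2) : pp s r = 0 := by
  match s with
  | 0 => rw [pp]; rw [if_neg]; omega
  | 1 => rw [pp]; rw [if_neg]; omega
  | 2 => rw [pp]; rw [if_neg]; omega
  | (s+3) => rw [pp]; rw [if_pos h]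

lemma aa_zero (s r : ℕ) (h : s < r ∨ s % 2 ≠ r % 2) : aa s r = 0 := by
  rw [aa, pp_zero s r h, Polynomial.eval_zero]

lemma aa_even (s r : ℕ) (hr : 3 ≤ r) : aa (2*s+4) r = aa (2*s+1) (r-3) + aa (2*s) r := by
  by_cases h : (2*s+4) < r ∨ (2*s+4) % 2 ≠ r % 2
  · rw [aa_zero _ _ h, aa_zero, aa_zero]; · ring
    · omega
    · omega
  · have e1 : 2*s+4 = (2*s+1)+3 := by omega
    rw [e1] at h ⊢
    rw [aa, pp, if_neg h, if_pos hr]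
    have e2 : (2*s+1+3) + 2*((2*s+1+3) % 2) - 4 = 2*s := by omega
    rw [e2]
    simp [aa]

lemma aa_odd (s r : ℕ) (hr : 3 ≤ r) : aa (2*s+3) r = aa (2*s) (r-3) + aa (2*s+1) r := by
  by_cases h : (2*s+3) < r ∨ (2*s+3) % 2 ≠ r % 2
  · rw [aa_zero _ _ h, aa_zero, aa_zero]; · ring
    · omega
    · omega
  · have e1 : 2*s+3 = (2*s)+3 := by omega
    rw [e1] at h ⊢
    rw [aa, pp, if_neg h, if_pos hr]
    have e2 : (2*s+3) + 2*((2*s+3) % 2) - 4 = 2*s+1 := by omega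
    rw [e2]
    simp [aa]

lemma key_even (m r : ℕ) (hr : 6 ≤ r) :
    aa (2*m+6) r - aa (2*m+4) r - aa (2*m+2) r + aa (2*m) r = aa (2*m) (r-6) := by
  have h1 := aa_even (m+1) r (by omega)
  have h2 := aa_even m r (by omega)
  have h3 := aa_odd m (r-3) (by omega)
  have e1 : 2*(m+1)+4 = 2*m+6 := by omega
  have e2 : 2*(m+1)+1 = 2*m+3 := by omega
  have e3 : 2*(m+1) = 2*m+2 := by omega
  have e4 : r - 3 - 3 = r - 6 := by omega
  rw [e1, e2, e3] at h1
  rw [e4] at h3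
  linarith

lemma key_odd (m r : ℕ) (hr : 6 ≤ r) :
    aa (2*m+7) r - aa (2*m+5) r - aa (2*m+3) r + aa (2*m+1) r = aa (2*m+1) (r-6) := by
  have h1 := aa_odd (m+2) r (by omega)
  have h2 := aa_odd m r (by omega)
  have h3 := aa_even m (r-3) (by omega)
  have e1 : 2*(m+2)+3 = 2*m+7 := by omega
  have e2 : 2*(m+2) = 2*m+4 := by omega
  have e4 : r - 3 - 3 = r - 6 := by omega
  rw [e1, e2] at h1
  rw [e4] at h3
  linarith

/-- The generating series `P_m(q,u)`: for `m` even, `P_m(q,u) = Σ_{s≥0} p_{2s,m} u^s`;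
for `m` odd, `P_m(q,u) = Σ_{s≥0} p_{2s+1,m} u^{s+1}`.  A formal power series in `u` with
coefficients in `ℤ[q]`. -/
noncomputable def Pser (m : ℕ) : PowerSeries (Polynomial ℤ) :=
  PowerSeries.mk fun n =>
    if m % 2 = 0 then pp (2 * n) m else if n = 0 then 0 else pp (2 * n - 1) m

/-- `thetaSubst a c` is the substituted partial theta series `Θ(a, c·u²) ∈ ℤ[q]⟦u⟧`,
i.e. `Σ_{s≥0} a^{s²} c^s u^{2s}`, where `Θ(q,u) = Σ_{s≥0} q^{s²}u^s`. -/
noncomputable def thetaSubst (a c : Polynomial ℤ) : PowerSeries (Polynomial ℤ) :=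
  PowerSeries.mk fun n => if n % 2 = 0 then a ^ ((n / 2) ^ 2) * c ^ (n / 2) else 0

/-- `P_m(1,u) ∈ ℤ⟦u⟧`, obtained from `P_m(q,u)` by evaluating each coefficient at
`q = 1`. -/
noncomputable def Pone (m : ℕ) : PowerSeries ℤ :=
  PowerSeries.map (Polynomial.evalRingHom (1 : ℤ)) (Pser m)

lemma coeff_Pone (m n : ℕ) :
    PowerSeries.coeff n (Pone m)
      = if m % 2 = 0 then aa (2*n) m else if n = 0 then 0 else aa (2*n-1) m := by
  rw [Pone, PowerSeries.coeff_map, Pser, PowerSeries.coeff_mk]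
  split_ifs <;> simp [aa]

/-- For every integer `r ≥ 6`, in `ℤ⟦u⟧`:
`(1-u)(1-u²)·P_r(1,u) = u³·P_{r-6}(1,u)`. -/
theorem stmt18 (r : ℕ) (hr : 6 ≤ r) :
    (1 - PowerSeries.X) * (1 - PowerSeries.X ^ 2) * Pone r
      = PowerSeries.X ^ 3 * Pone (r - 6) := by
  have expand : (1 - PowerSeries.X) * (1 - PowerSeries.X ^ 2) * Pone r
      = Pone r - PowerSeries.X ^ 1 * Pone r - PowerSeries.X ^ 2 * Pone r
        + PowerSeries.X ^ 3 * Pone r := by ring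
  rw [expand]
  ext n
  simp only [map_add, map_sub, PowerSeries.coeff_X_pow_mul', coeff_Pone]
  have hpar : (r - 6) % 2 = r % 2 := by omega
  rw [hpar]
  have z : ∀ k, k < r → aa k r = 0 := fun k hk => aa_zero k r (Or.inl hk)
  by_cases hre : r % 2 = 0
  · simp only [if_pos hre]
    match n with
    | 0 => norm_num [z 0 (by omega)]
    | 1 => norm_num [z 0 (by omega), z 2 (by omega)]
    | 2 => norm_num [z 0 (by omega), z 2 (by omega), z 4 (by omega)]
    | (m+3) =>
      have h1 : 1 ≤ m + 3 := by omega
      have h2 : 2 ≤ m + 3 := by omega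
      have h3 : 3 ≤ m + 3 := by omega
      simp only [if_pos h1, if_pos h2, if_pos h3]
      have := key_even m r hr
      have e1 : 2*(m+3) = 2*m+6 := by omega
      have e2 : 2*(m+3-1) = 2*m+4 := by omega
      have e3 : 2*(m+3-2) = 2*m+2 := by omega
      have e4 : 2*(m+3-3) = 2*m := by omega
      rw [e1, e2, e3, e4]
      linarith
  · simp only [if_neg hre]
    match n with
    | 0 => norm_num
    | 1 => norm_num [z 1 (by omega)]
    | 2 => norm_num [z 1 (by omega), z 3 (by omega)]
    | 3 => norm_num [z 1 (by omega), z 3 (by omega), z 5 (by omega)]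
    | (m+4) =>
      have h1 : 1 ≤ m + 4 := by omega
      have h2 : 2 ≤ m + 4 := by omega
      have h3 : 3 ≤ m + 4 := by omega
      simp only [if_pos h1, if_pos h2, if_pos h3,
        if_neg (show ¬(m+4 = 0) by omega), if_neg (show ¬(m+4-1 = 0) by omega),
        if_neg (show ¬(m+4-2 = 0) by omega), if_neg (show ¬(m+4-3 = 0) by omega)]
      have := key_odd m r hr
      have e1 : 2*(m+4)-1 = 2*m+7 := by omega
      have e2 : 2*(m+4-1)-1 = 2*m+5 := by omega
      have e3 : 2*(m+4-2)-1 = 2*m+3 := by omega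
      have e4 : 2*(m+4-3)-1 = 2*m+1 := by omega
      rw [e1, e2, e3, e4]
      linarith
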